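/- Let ⊙ be a pseudo-multiplication on [0,∞]. The following conditions are equivalent: (i) ⊙ is non-degenerate, i.e., 1⊙ is ⊙-finite; (ii) there exists a positive ⊙-finite element; (iii) ⊙ is commutative on [0, 1⊙], i.e., s ⊙ t = t ⊙ s for all s, t ∈ [0, 1⊙]; (iv) the set F⊙ of ⊙-finite elements is either [0,∞] or of the form [0, φ) for some φ with 1⊙ < φ ≤ ∞. -/

import Mathlib

open scoped ENNReal
open Set Filter Topology

/-- A pseudo-multiplication on `[0,∞]`: associative, monotone in each argument,
continuous on `(0,∞) × [0,∞]`, with `s ↦ s ⊙ t` continuous on `(0,∞]`,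
admitting a left identity, without zero divisors, and with `0` as annihilator. -/
structure PseudoMul where
  op : ℝ≥0∞ → ℝ≥0∞ → ℝ≥0∞
  assoc : ∀ a b c, op (op a b) c = op a (op b c)
  mono_left : ∀ t, Monotone fun s => op s t
  mono_right : ∀ s, Monotone fun t => op s t
  continuousOn : ContinuousOn (fun p : ℝ≥0∞ × ℝ≥0∞ => op p.1 p.2) (Ioo 0 ⊤ ×ˢ univ)
  continuousOn_left : ∀ t, ContinuousOn (fun s => op s t) (Ioi 0)
  one : ℝ≥0∞
  one_op : ∀ t, op one t = t
  no_zero_divisors : ∀ s t, op s t = 0 → s = 0 ∨ t = 0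
  zero_op : ∀ t, op 0 t = 0
  op_zero : ∀ t, op t 0 = 0

/-- An element `t` is `⊙`-finite if `⨅_{s>0} s ⊙ t = 0`. -/
def PseudoMul.OFinite (P : PseudoMul) (t : ℝ≥0∞) : Prop :=
  ⨅ s ∈ Ioi (0 : ℝ≥0∞), P.op s t = 0

/-- `⊙` is non-degenerate if its left identity is `⊙`-finite. -/
def PseudoMul.Nondegenerate (P : PseudoMul) : Prop :=
  P.OFinite P.one

namespace PseudoMul
variable (P : PseudoMul)

lemma continuousAt_op {s t : ℝ≥0∞} (hs : 0 < s) (hs' : s < ⊤) :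
    ContinuousAt (fun p : ℝ≥0∞ × ℝ≥0∞ => P.op p.1 p.2) (s, t) :=
  P.continuousOn.continuousAt
    (((isOpen_Ioo.prod isOpen_univ)).mem_nhds (by exact ⟨⟨hs, hs'⟩, mem_univ _⟩))

lemma continuous_op_right {s : ℝ≥0∞} (hs : 0 < s) (hs' : s < ⊤) :
    Continuous fun t => P.op s t := by
  rw [continuous_iff_continuousAt]
  intro t
  exact (P.continuousAt_op hs hs').comp (Continuous.continuousAt (by continuity))

lemma one_pos : 0 < P.one := by
  rcases eq_or_lt_of_le (zero_le : (0:ℝ≥0∞) ≤ P.one) with h | h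
  · exfalso
    have := P.one_op 1
    rw [← h, P.zero_op] at this
    exact one_ne_zero this.symm
  · exact h

lemma exists_op_lt {t ε : ℝ≥0∞} (h : P.OFinite t) (hε : 0 < ε) :
    ∃ s, 0 < s ∧ P.op s t < ε := by
  have : (⨅ s ∈ Ioi (0 : ℝ≥0∞), P.op s t) < ε := by rw [h]; exact hε
  obtain ⟨s, hs⟩ := iInf_lt_iff.mp this
  obtain ⟨hs0, h2⟩ := iInf_lt_iff.mp hs
  exact ⟨s, hs0, h2⟩

lemma exists_op_lt' {t ε : ℝ≥0∞} (h : P.OFinite t) (hε : 0 < ε) :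
    ∃ s, 0 < s ∧ s < ⊤ ∧ P.op s t < ε := by
  obtain ⟨s, hs0, hs⟩ := P.exists_op_lt h hε
  refine ⟨min s 1, lt_min hs0 zero_lt_one, lt_of_le_of_lt (min_le_right _ _) (by norm_num), ?_⟩
  exact lt_of_le_of_lt (P.mono_left t (min_le_left s 1)) hs

lemma ofinite_of_forall {t : ℝ≥0∞} (h : ∀ ε, 0 < ε → ∃ s, 0 < s ∧ P.op s t < ε) :
    P.OFinite t := by
  refine le_antisymm ?_ zero_le
  refine le_of_forall_gt_imp_ge_of_dense fun ε hε => ?_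
  obtain ⟨s, hs0, hs⟩ := h ε hε
  exact le_trans (iInf₂_le s hs0) hs.le

lemma ofinite_anti {t t' : ℝ≥0∞} (h : t' ≤ t) (ht : P.OFinite t) : P.OFinite t' := by
  refine P.ofinite_of_forall fun ε hε => ?_
  obtain ⟨s, hs0, hs⟩ := P.exists_op_lt ht hε
  exact ⟨s, hs0, lt_of_le_of_lt (P.mono_right s h) hs⟩

variable {P}

lemma Nondegenerate.ofinite_of_le_one (hN : P.Nondegenerate) {t : ℝ≥0∞} (ht : t ≤ P.one) :
    P.OFinite t := P.ofinite_anti ht hN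

/-- Under nondegeneracy, `one` is a right identity on `[0, one]`. -/
lemma Nondegenerate.op_one (hN : P.Nondegenerate) {s : ℝ≥0∞} (hs : s ≤ P.one) :
    P.op s P.one = s := by
  rcases eq_or_lt_of_le (zero_le : (0:ℝ≥0∞) ≤ s) with h | h
  · rw [← h, P.zero_op]
  -- find s₁ with op s₁ one = s via IVT, then use idempotency of f
  obtain ⟨s₀, hs₀0, hs₀⟩ := P.exists_op_lt hN h
  have hs₀e : s₀ ≤ P.one := by
    by_contra hc
    push_neg at hc
    have : P.op P.one P.one ≤ P.op s₀ P.one := P.mono_left _ hc.le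
    rw [P.one_op] at this
    exact absurd (lt_of_le_of_lt (le_trans hs this) hs₀) (lt_irrefl _)
  have hcont : ContinuousOn (fun u => P.op u P.one) (Icc s₀ P.one) :=
    (P.continuousOn_left P.one).mono (fun u hu => lt_of_lt_of_le hs₀0 hu.1)
  have hy : s ∈ Icc (P.op s₀ P.one) (P.op P.one P.one) := by
    constructor
    · exact hs₀.le
    · rw [P.one_op]; exact hs
  obtain ⟨u, _, hu⟩ := intermediate_value_Icc hs₀e hcont hy
  simp only at hu
  -- op s one = op (op u one) one = op u (op one one) = op u one = s
  calc P.op s P.one = P.op (P.op u P.one) P.one := by rw [hu]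
    _ = P.op u (P.op P.one P.one) := P.assoc _ _ _
    _ = P.op u P.one := by rw [P.one_op]
    _ = s := hu

lemma Nondegenerate.op_le_left (hN : P.Nondegenerate) {s t : ℝ≥0∞} (hs : s ≤ P.one)
    (ht : t ≤ P.one) : P.op s t ≤ s := by
  calc P.op s t ≤ P.op s P.one := P.mono_right s ht
    _ = s := hN.op_one hs

lemma op_le_right (P : PseudoMul) {s t : ℝ≥0∞} (hs : s ≤ P.one) : P.op s t ≤ t := by
  calc P.op s t ≤ P.op P.one t := P.mono_left t hs
    _ = t := P.one_op t



/-- Idempotents act as `min` on `[0, one]`. -/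
lemma Nondegenerate.idem_op (hN : P.Nondegenerate) {a z : ℝ≥0∞} (ha : P.op a a = a)
    (hae : a ≤ P.one) (hz : z ≤ P.one) : P.op a z = min a z ∧ P.op z a = min a z := by
  rcases eq_or_lt_of_le hae with hone | hone
  · subst hone
    rw [P.one_op, hN.op_one hz, min_eq_right hz]
    exact ⟨rfl, rfl⟩
  rcases le_or_gt a z with hle | hlt
  · rw [min_eq_left hle]
    constructor
    · refine le_antisymm ?_ ?_
      · calc P.op a z ≤ P.op a P.one := P.mono_right a hz
          _ = a := hN.op_one hae
      · calc a = P.op a a := ha.symm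
          _ ≤ P.op a z := P.mono_right a hle
    · refine le_antisymm ?_ ?_
      · calc P.op z a ≤ P.op P.one a := P.mono_left a hz
          _ = a := P.one_op a
      · calc a = P.op a a := ha.symm
          _ ≤ P.op z a := P.mono_left a hle
  · rw [min_eq_right hlt.le]
    rcases eq_or_lt_of_le (zero_le : (0:ℝ≥0∞) ≤ z) with hz0 | hz0
    · rw [← hz0, P.op_zero, P.zero_op]
      exact ⟨rfl, rfl⟩
    have ha0 : 0 < a := lt_trans hz0 hlt
    have hatop : a < ⊤ := lt_of_lt_of_le hone le_top
    constructor
    · -- find w with op a w = z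
      have hcont : ContinuousOn (fun u => P.op a u) (Icc 0 P.one) :=
        (P.continuous_op_right ha0 hatop).continuousOn
      have hy : z ∈ Icc (P.op a 0) (P.op a P.one) := by
        rw [P.op_zero, hN.op_one hae]
        exact ⟨(zero_le : (0:ℝ≥0∞) ≤ z), hlt.le⟩
      obtain ⟨w, _, hw⟩ := intermediate_value_Icc (zero_le : (0:ℝ≥0∞) ≤ P.one) hcont hy
      simp only at hw
      calc P.op a z = P.op a (P.op a w) := by rw [hw]
        _ = P.op (P.op a a) w := (P.assoc _ _ _).symm
        _ = P.op a w := by rw [ha]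
        _ = z := hw
    · -- find w with op w a = z
      obtain ⟨s₀, hs₀0, hs₀⟩ := P.exists_op_lt (hN.ofinite_of_le_one hae) hz0
      have hs₀e : s₀ ≤ P.one := by
        by_contra hc
        push_neg at hc
        have h1 : P.op P.one a ≤ P.op s₀ a := P.mono_left a hc.le
        rw [P.one_op] at h1
        exact absurd (lt_of_le_of_lt (le_trans hlt.le h1) hs₀) (lt_irrefl _)
      have hcont : ContinuousOn (fun u => P.op u a) (Icc s₀ P.one) :=
        (P.continuousOn_left a).mono (fun u hu => lt_of_lt_of_le hs₀0 hu.1)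
      have hy : z ∈ Icc (P.op s₀ a) (P.op P.one a) := by
        rw [P.one_op]
        exact ⟨hs₀.le, hlt.le⟩
      obtain ⟨w, _, hw⟩ := intermediate_value_Icc hs₀e hcont hy
      simp only at hw
      calc P.op z a = P.op (P.op w a) a := by rw [hw]
        _ = P.op w (P.op a a) := P.assoc _ _ _
        _ = P.op w a := by rw [ha]
        _ = z := hw


end PseudoMul

/-- Powers of `w`: `pw w 0 = one`, `pw w (k+1) = pw w k ⊙ w`. -/
def PseudoMul.pw (P : PseudoMul) (w : ℝ≥0∞) : ℕ → ℝ≥0∞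
  | 0 => P.one
  | k + 1 => P.op (P.pw w k) w

namespace PseudoMul
variable {P : PseudoMul}

lemma pw_zero (w : ℝ≥0∞) : P.pw w 0 = P.one := rfl

lemma pw_succ (w : ℝ≥0∞) (k : ℕ) : P.pw w (k + 1) = P.op (P.pw w k) w := rfl

lemma pw_le_one {w : ℝ≥0∞} (hw : w ≤ P.one) (k : ℕ) : P.pw w k ≤ P.one := by
  induction k with
  | zero => exact le_rfl
  | succ k ih =>
    calc P.pw w (k + 1) = P.op (P.pw w k) w := pw_succ w k
      _ ≤ P.op P.one w := P.mono_left w ih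
      _ = w := P.one_op w
      _ ≤ P.one := hw

lemma pw_one' (w : ℝ≥0∞) : P.pw w 1 = w := by
  rw [show (1:ℕ) = 0 + 1 from rfl, pw_succ, pw_zero, P.one_op]

lemma Nondegenerate.pw_antitone (hN : P.Nondegenerate) {w : ℝ≥0∞} (hw : w ≤ P.one) :
    Antitone (P.pw w) := by
  refine antitone_nat_of_succ_le fun k => ?_
  calc P.pw w (k + 1) = P.op (P.pw w k) w := pw_succ w k
    _ ≤ P.op (P.pw w k) P.one := P.mono_right _ hw
    _ = P.pw w k := hN.op_one (pw_le_one hw k)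

lemma Nondegenerate.pw_add (hN : P.Nondegenerate) {w : ℝ≥0∞} (hw : w ≤ P.one) (m n : ℕ) :
    P.pw w (m + n) = P.op (P.pw w m) (P.pw w n) := by
  induction n with
  | zero => rw [Nat.add_zero, pw_zero, hN.op_one (pw_le_one hw m)]
  | succ n ih =>
    calc P.pw w (m + (n + 1)) = P.pw w ((m + n) + 1) := by ring_nf
      _ = P.op (P.pw w (m + n)) w := pw_succ w (m+n)
      _ = P.op (P.op (P.pw w m) (P.pw w n)) w := by rw [ih]
      _ = P.op (P.pw w m) (P.op (P.pw w n) w) := P.assoc _ _ _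
      _ = P.op (P.pw w m) (P.pw w (n + 1)) := by rw [pw_succ]

lemma pw_pos {w : ℝ≥0∞} (hw : 0 < w) (k : ℕ) : 0 < P.pw w k := by
  induction k with
  | zero => exact P.one_pos
  | succ k ih =>
    rcases eq_or_lt_of_le (zero_le : (0:ℝ≥0∞) ≤ P.pw w (k+1)) with h | h
    · exfalso
      rcases P.no_zero_divisors _ _ h.symm with h1 | h1
      · exact absurd h1 (ne_of_gt ih)
      · exact absurd h1 (ne_of_gt hw)
    · exact h

/-- The limit of powers is idempotent. -/
lemma Nondegenerate.pw_iInf_idem (hN : P.Nondegenerate) {w : ℝ≥0∞} (hw0 : 0 < w)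
    (hw : w ≤ P.one) (hwtop : w < ⊤) :
    P.op (⨅ k, P.pw w k) (⨅ k, P.pw w k) = ⨅ k, P.pw w k := by
  set L := ⨅ k, P.pw w k with hL
  have hLle : ∀ k, L ≤ P.pw w k := fun k => iInf_le _ k
  have hLone : L ≤ P.one := hLle 0
  have hLw : L ≤ w := le_trans (hLle 1) (pw_one' w).le
  rcases eq_or_lt_of_le (zero_le : (0:ℝ≥0∞) ≤ L) with h0 | h0
  · rw [← h0, P.zero_op]
  have hLtop : L < ⊤ := lt_of_le_of_lt hLw hwtop
  have htend : Tendsto (P.pw w) atTop (𝓝 L) :=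
    tendsto_atTop_iInf (hN.pw_antitone hw)
  -- step 1 : op L w = L
  have h1 : P.op L w = L := by
    have hc : ContinuousAt (fun s => P.op s w) L :=
      (P.continuousOn_left w).continuousAt (isOpen_Ioi.mem_nhds h0)
    have t1 : Tendsto (fun k => P.op (P.pw w k) w) atTop (𝓝 (P.op L w)) :=
      hc.tendsto.comp htend
    have t2 : Tendsto (fun k => P.op (P.pw w k) w) atTop (𝓝 L) := by
      have he : (fun k => P.op (P.pw w k) w) = fun k => P.pw w (k + 1) := by
        funext k; rw [pw_succ]
      rw [he]
      exact htend.comp (tendsto_add_atTop_nat 1)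
    exact tendsto_nhds_unique t1 t2
  -- step 2 : op L (pw k) = L
  have h2 : ∀ k, P.op L (P.pw w k) = L := by
    intro k
    induction k with
    | zero => exact hN.op_one hLone
    | succ k ih =>
      calc P.op L (P.pw w (k + 1)) = P.op L (P.op (P.pw w k) w) := by rw [pw_succ]
        _ = P.op (P.op L (P.pw w k)) w := (P.assoc _ _ _).symm
        _ = P.op L w := by rw [ih]
        _ = L := h1
  -- step 3
  have hc : ContinuousAt (fun t => P.op L t) L := (P.continuous_op_right h0 hLtop).continuousAt
  have t1 : Tendsto (fun k => P.op L (P.pw w k)) atTop (𝓝 (P.op L L)) := hc.tendsto.comp htend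
  have t2 : Tendsto (fun k => P.op L (P.pw w k)) atTop (𝓝 L) := by
    simp only [h2]
    exact tendsto_const_nhds
  exact tendsto_nhds_unique t1 t2



lemma Nondegenerate.gap_step (hN : P.Nondegenerate) {x y w b : ℝ≥0∞}
    (hx0 : 0 < x) (hy0 : 0 < y) (hw : max x y < w) (hwb : w < b) (hb : b ≤ P.one)
    (hE : ∀ t, P.op t t = t → t ≤ P.one → min x y ≤ t → b ≤ t) :
    ∃ q r, x ≤ q ∧ q ≤ P.one ∧ y ≤ r ∧ r ≤ P.one ∧ P.op q w = x ∧ P.op r w = y ∧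
      P.op y x ≤ P.op q r := by
  have hxw : x < w := lt_of_le_of_lt (le_max_left x y) hw
  have hyw : y < w := lt_of_le_of_lt (le_max_right x y) hw
  have hw0 : 0 < w := lt_trans hx0 hxw
  have hwone : w ≤ P.one := le_trans hwb.le hb
  have hwtop : w < ⊤ := lt_of_lt_of_le hwb (le_trans hb le_top)
  set L := ⨅ k, P.pw w k with hLdef
  have hidem : P.op L L = L := hN.pw_iInf_idem hw0 hwone hwtop
  have hLone : L ≤ P.one := le_trans (iInf_le _ 0) (le_of_eq (pw_zero w))
  have hLw : L ≤ w := le_trans (iInf_le _ 1) (le_of_eq (pw_one' w))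
  have hLmin : L < min x y := by
    by_contra hc
    push_neg at hc
    exact absurd (lt_of_le_of_lt (le_trans (hE L hidem hLone hc) hLw) hwb) (lt_irrefl _)
  have hLx : L < x := lt_of_lt_of_le hLmin (min_le_left x y)
  have hLy : L < y := lt_of_lt_of_le hLmin (min_le_right x y)
  -- bracketing indices
  have hbrk : ∀ z : ℝ≥0∞, L < z → z < w → ∃ m : ℕ, z ≤ P.pw w m ∧ P.pw w (m + 1) < z := by
    intro z hLz hzw
    have hex : ∃ k, P.pw w k < z := iInf_lt_iff.mp (hLdef ▸ hLz)
    have hk₀ := Nat.find_spec hex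
    have h0 : Nat.find hex ≠ 0 := by
      intro h
      rw [h, pw_zero] at hk₀
      exact absurd (lt_of_lt_of_le hk₀ (le_trans hzw.le hwone)) (lt_irrefl _)
    obtain ⟨m, hm⟩ := Nat.exists_eq_succ_of_ne_zero h0
    refine ⟨m, ?_, ?_⟩
    · have := Nat.find_min hex (m := m) (by omega)
      push_neg at this
      exact this
    · rw [← Nat.succ_eq_add_one, ← hm]
      exact hk₀
  obtain ⟨m, hmx, hmx'⟩ := hbrk x hLx hxw
  obtain ⟨n, hny, hny'⟩ := hbrk y hLy hyw
  -- division: find q with op q w = z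
  have hdiv : ∀ z : ℝ≥0∞, 0 < z → z < w → ∃ q, q ≤ P.one ∧ P.op q w = z ∧ z ≤ q := by
    intro z hz0 hzw
    obtain ⟨s₀, hs₀0, hs₀⟩ := P.exists_op_lt (hN.ofinite_of_le_one hwone) hz0
    have hs₀e : s₀ ≤ P.one := by
      by_contra hc
      push_neg at hc
      have h1 : P.op P.one w ≤ P.op s₀ w := P.mono_left w hc.le
      rw [P.one_op] at h1
      exact absurd (lt_of_le_of_lt (le_trans hzw.le h1) hs₀) (lt_irrefl _)
    have hcont : ContinuousOn (fun u => P.op u w) (Icc s₀ P.one) :=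
      (P.continuousOn_left w).mono (fun u hu => lt_of_lt_of_le hs₀0 hu.1)
    have hy : z ∈ Icc (P.op s₀ w) (P.op P.one w) := by
      rw [P.one_op]
      exact ⟨hs₀.le, hzw.le⟩
    obtain ⟨q, hqm, hq⟩ := intermediate_value_Icc hs₀e hcont hy
    simp only at hq
    refine ⟨q, hqm.2, hq, ?_⟩
    calc z = P.op q w := hq.symm
      _ ≤ P.op q P.one := P.mono_right q hwone
      _ = q := hN.op_one hqm.2
  obtain ⟨q, hqone, hq, hxq⟩ := hdiv x hx0 hxw
  obtain ⟨r, hrone, hr, hyr⟩ := hdiv y hy0 hyw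
  -- pw m ≤ q
  have hpq : P.pw w m ≤ q := by
    by_contra hc
    push_neg at hc
    have : P.op q w ≤ P.pw w (m + 1) := by
      rw [pw_succ]
      exact P.mono_left w hc.le
    rw [hq] at this
    exact absurd (lt_of_le_of_lt this hmx') (lt_irrefl _)
  have hpr : P.pw w n ≤ r := by
    by_contra hc
    push_neg at hc
    have : P.op r w ≤ P.pw w (n + 1) := by
      rw [pw_succ]
      exact P.mono_left w hc.le
    rw [hr] at this
    exact absurd (lt_of_le_of_lt this hny') (lt_irrefl _)
  refine ⟨q, r, hxq, hqone, hyr, hrone, hq, hr, ?_⟩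
  calc P.op y x ≤ P.op (P.pw w n) x := P.mono_left x (le_trans hny (le_refl _))
    _ ≤ P.op (P.pw w n) (P.pw w m) := P.mono_right _ hmx
    _ = P.pw w (n + m) := (hN.pw_add hwone n m).symm
    _ = P.pw w (m + n) := by rw [Nat.add_comm]
    _ = P.op (P.pw w m) (P.pw w n) := hN.pw_add hwone m n
    _ ≤ P.op q (P.pw w n) := P.mono_left _ hpq
    _ ≤ P.op q r := P.mono_right q hpr

end PseudoMul

namespace PseudoMul
variable {P : PseudoMul}

lemma Nondegenerate.gap_le (hN : P.Nondegenerate) {x y : ℝ≥0∞}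
    (hx0 : 0 < x) (hy0 : 0 < y) (hx1 : x < P.one) (hy1 : y < P.one)
    (hA : ¬ ∃ a, P.op a a = a ∧ a ≤ P.one ∧ min x y ≤ a ∧ a ≤ max x y) :
    P.op y x ≤ P.op x y := by
  set c := max x y with hc
  set S := {t : ℝ≥0∞ | P.op t t = t ∧ t ≤ P.one ∧ c < t} with hS
  have honeS : P.one ∈ S := ⟨P.one_op P.one, le_rfl, max_lt hx1 hy1⟩
  have hSne : S.Nonempty := ⟨P.one, honeS⟩
  set b := sInf S with hb
  have hbone : b ≤ P.one := sInf_le honeS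
  have hcble : c ≤ b := le_sInf (fun t ht => ht.2.2.le)
  have hc0 : 0 < c := lt_of_lt_of_le hx0 (le_max_left x y)
  have hb0 : 0 < b := lt_of_lt_of_le hc0 hcble
  -- b is an idempotent
  have hbidem : P.op b b = b := by
    by_cases hbS : b ∈ S
    · exact hbS.1
    by_cases hbt : b = ⊤
    · exfalso
      have hone_top : P.one = ⊤ := top_le_iff.mp (hbt ▸ hbone)
      exact hbS (show b ∈ S from (hbt.trans hone_top.symm) ▸ honeS)
    have hbtop : b < ⊤ := lt_top_iff_ne_top.mpr hbt
    have hclos : b ∈ closure S := csInf_mem_closure hSne (OrderBot.bddBelow S)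
    haveI : (𝓝[S] b).NeBot := mem_closure_iff_nhdsWithin_neBot.mp hclos
    have hG : ContinuousAt (fun t : ℝ≥0∞ => P.op t t) b := by
      have hf : ContinuousAt (fun t : ℝ≥0∞ => (t, t)) b :=
        (continuous_id.prodMk continuous_id).continuousAt
      exact ContinuousAt.comp (x := b) (g := fun p : ℝ≥0∞ × ℝ≥0∞ => P.op p.1 p.2)
        (f := fun t : ℝ≥0∞ => (t, t)) (P.continuousAt_op hb0 hbtop) hf
    have t1 : Tendsto (fun t : ℝ≥0∞ => P.op t t) (𝓝[S] b) (𝓝 (P.op b b)) :=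
      hG.continuousWithinAt
    have t2 : Tendsto (fun t : ℝ≥0∞ => P.op t t) (𝓝[S] b) (𝓝 b) := by
      refine (tendsto_id.mono_left nhdsWithin_le_nhds).congr' ?_
      exact eventually_nhdsWithin_of_forall (fun t ht => ht.1.symm)
    exact (tendsto_nhds_unique t1 t2)
  -- c < b
  have hcb : c < b := by
    rcases eq_or_lt_of_le hcble with h | h
    · exact absurd ⟨b, hbidem, hbone, le_trans min_le_max (h ▸ le_rfl), h ▸ le_rfl⟩ hA
    · exact h
  -- idempotents avoid [min x y, b)
  have hE : ∀ t, P.op t t = t → t ≤ P.one → min x y ≤ t → b ≤ t := by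
    intro t hti htone htmin
    by_contra htb
    push_neg at htb
    rcases le_or_gt t c with h | h
    · exact hA ⟨t, hti, htone, htmin, h⟩
    · exact absurd (sInf_le (show t ∈ S from ⟨hti, htone, h⟩)) (not_le.mpr htb)
  -- a sequence increasing to b
  obtain ⟨u, humono, humem, hulim⟩ := exists_seq_strictMono_tendsto' hcb
  have H : ∀ n, ∃ q r, x ≤ q ∧ q ≤ P.one ∧ y ≤ r ∧ r ≤ P.one ∧
      P.op q (u n) = x ∧ P.op r (u n) = y ∧ P.op y x ≤ P.op q r :=
    fun n => hN.gap_step hx0 hy0 (humem n).1 (humem n).2 hbone hE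
  choose q r h1 h2 h3 h4 h5 h6 h7 using H
  -- q tends to x, r tends to y
  have key : ∀ (z : ℝ≥0∞) (v : ℕ → ℝ≥0∞), 0 < z → z < b →
      (∀ n, z ≤ v n) → (∀ n, P.op (v n) (u n) = z) → Tendsto v atTop (𝓝 z) := by
    intro z v hz0 hzb hzv hvu
    rw [tendsto_order]
    constructor
    · intro a ha
      exact Eventually.of_forall (fun n => lt_of_lt_of_le ha (hzv n))
    · intro a ha
      obtain ⟨x', hx'l, hx'r⟩ := exists_between (show z < min a b from lt_min ha hzb)
      have hx'b : x' < b := lt_of_lt_of_le hx'r (min_le_right a b)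
      have hx'a : x' < a := lt_of_lt_of_le hx'r (min_le_left a b)
      have hx'top : x' < ⊤ := lt_of_lt_of_le hx'r le_top
      have hx'0 : 0 < x' := lt_trans hz0 hx'l
      have hx'one : x' ≤ P.one := le_trans hx'b.le hbone
      have hx'bop : P.op x' b = x' := by
        have h := (hN.idem_op hbidem hbone hx'one).2
        rw [min_eq_right hx'b.le] at h
        exact h
      have hcont : Continuous (fun t => P.op x' t) := P.continuous_op_right hx'0 hx'top
      have htt : Tendsto (fun n => P.op x' (u n)) atTop (𝓝 x') := by
        have h := hcont.continuousAt.tendsto.comp hulim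
        rwa [hx'bop] at h
      filter_upwards [htt.eventually_const_lt hx'l] with n hn
      by_contra hcq
      push_neg at hcq
      have hle : P.op x' (u n) ≤ P.op (v n) (u n) := P.mono_left _ (le_trans hx'a.le hcq)
      rw [hvu n] at hle
      exact absurd (lt_of_lt_of_le hn hle) (lt_irrefl _)
  have hxb : x < b := lt_of_le_of_lt (le_max_left x y) hcb
  have hyb : y < b := lt_of_le_of_lt (le_max_right x y) hcb
  have hqt : Tendsto q atTop (𝓝 x) := key x q hx0 hxb h1 h5
  have hrt : Tendsto r atTop (𝓝 y) := key y r hy0 hyb h3 h6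
  have hxtop : x < ⊤ := lt_of_lt_of_le hx1 le_top
  have hct : ContinuousAt (fun p : ℝ≥0∞ × ℝ≥0∞ => P.op p.1 p.2) (x, y) :=
    P.continuousAt_op hx0 hxtop
  have htend : Tendsto (fun n => P.op (q n) (r n)) atTop (𝓝 (P.op x y)) :=
    hct.tendsto.comp (hqt.prodMk_nhds hrt)
  exact ge_of_tendsto' htend h7

/-- Commutativity on `[0, one]` for a nondegenerate pseudo-multiplication. -/
lemma Nondegenerate.comm (hN : P.Nondegenerate) {s t : ℝ≥0∞} (hs : s ≤ P.one)
    (ht : t ≤ P.one) : P.op s t = P.op t s := by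
  rcases eq_or_lt_of_le (zero_le : (0:ℝ≥0∞) ≤ s) with hs0 | hs0
  · rw [← hs0, P.zero_op, P.op_zero]
  rcases eq_or_lt_of_le (zero_le : (0:ℝ≥0∞) ≤ t) with ht0 | ht0
  · rw [← ht0, P.zero_op, P.op_zero]
  rcases eq_or_lt_of_le hs with hs1 | hs1
  · rw [hs1, P.one_op, hN.op_one ht]
  rcases eq_or_lt_of_le ht with ht1 | ht1
  · rw [ht1, P.one_op, hN.op_one hs]
  by_cases hA : ∃ a, P.op a a = a ∧ a ≤ P.one ∧ min s t ≤ a ∧ a ≤ max s t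
  · obtain ⟨a, haidem, haone, hamin, hamax⟩ := hA
    have h1 : P.op (max s t) (min s t) = min s t := by
      refine le_antisymm ?_ ?_
      · calc P.op (max s t) (min s t) ≤ P.op P.one (min s t) :=
            P.mono_left _ (max_le hs ht)
          _ = min s t := P.one_op _
      · calc min s t = min a (min s t) := (min_eq_right hamin).symm
          _ = P.op a (min s t) := ((hN.idem_op haidem haone (le_trans (min_le_left s t) hs)).1).symm
          _ ≤ P.op (max s t) (min s t) := P.mono_left _ hamax
    have h2 : P.op (min s t) (max s t) = min s t := by
      refine le_antisymm ?_ ?_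
      · calc P.op (min s t) (max s t) ≤ P.op (min s t) P.one :=
            P.mono_right _ (max_le hs ht)
          _ = min s t := hN.op_one (le_trans (min_le_left s t) hs)
      · calc min s t = min a (min s t) := (min_eq_right hamin).symm
          _ = P.op (min s t) a := ((hN.idem_op haidem haone (le_trans (min_le_left s t) hs)).2).symm
          _ ≤ P.op (min s t) (max s t) := P.mono_right _ hamax
    rcases le_total s t with h | h
    · rw [min_eq_left h] at h1 h2
      rw [max_eq_right h] at h1 h2
      rw [h1, h2]
    · rw [min_eq_right h] at h1 h2
      rw [max_eq_left h] at h1 h2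
      rw [h1, h2]
  · refine le_antisymm ?_ ?_
    · refine hN.gap_le ht0 hs0 ht1 hs1 ?_
      rw [min_comm, max_comm]
      exact hA
    · exact hN.gap_le hs0 ht0 hs1 ht1 hA

end PseudoMul

namespace PseudoMul
variable {P : PseudoMul}

lemma Nondegenerate.no_max (hN : P.Nondegenerate) {t₀ : ℝ≥0∞} (h0 : P.OFinite t₀)
    (htop : t₀ ≠ ⊤) (hmax : ∀ t, t₀ < t → ¬ P.OFinite t) : False := by
  have hone : P.one ≤ t₀ := by
    by_contra hc
    push_neg at hc
    exact hmax _ hc hN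
  have ht₀0 : 0 < t₀ := lt_of_lt_of_le P.one_pos hone
  have ht₀top : t₀ < ⊤ := lt_top_iff_ne_top.mpr htop
  set C : ℝ≥0∞ → ℝ≥0∞ := fun t => ⨅ s ∈ Ioi (0:ℝ≥0∞), P.op s t with hCdef
  have claim1 : (⨅ t ∈ Ioi t₀, C t) = 0 := by
    refine le_antisymm ?_ zero_le
    refine le_of_forall_gt_imp_ge_of_dense fun ε hε => ?_
    obtain ⟨s, hs0, hstop, hsε⟩ := P.exists_op_lt' h0 hε
    have hU : {t : ℝ≥0∞ | P.op s t < ε} ∈ 𝓝 t₀ :=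
      IsOpen.mem_nhds (isOpen_Iio.preimage (P.continuous_op_right hs0 hstop)) hsε
    obtain ⟨u, ht₀u, hsub⟩ := exists_Ico_subset_of_mem_nhds hU ⟨⊤, ht₀top⟩
    obtain ⟨t₁, ht₁l, ht₁r⟩ := exists_between ht₀u
    have ht₁ : P.op s t₁ < ε := hsub ⟨ht₁l.le, ht₁r⟩
    calc (⨅ t ∈ Ioi t₀, C t) ≤ C t₁ := iInf₂_le t₁ ht₁l
      _ ≤ P.op s t₁ := iInf₂_le s hs0
      _ ≤ ε := ht₁.le
  have hex : ∃ t₁, t₀ < t₁ ∧ C t₁ < t₀ := by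
    have h : (⨅ t ∈ Ioi t₀, C t) < t₀ := by rw [claim1]; exact ht₀0
    obtain ⟨t₁, h1⟩ := iInf_lt_iff.mp h
    obtain ⟨h2, h3⟩ := iInf_lt_iff.mp h1
    exact ⟨t₁, h2, h3⟩
  obtain ⟨t₁, ht₁, hc₁t₀⟩ := hex
  set c₁ := C t₁ with hc₁def
  have hc₁0 : 0 < c₁ := by
    rcases eq_or_lt_of_le (zero_le : (0:ℝ≥0∞) ≤ c₁) with h | h
    · exact absurd h.symm (hmax t₁ ht₁)
    · exact h
  have hc₁fin : P.OFinite c₁ := P.ofinite_anti hc₁t₀.le h0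
  obtain ⟨s', hs'0, hs'top, hs'⟩ := P.exists_op_lt' hc₁fin hc₁0
  have hU : {v : ℝ≥0∞ | P.op s' v < c₁} ∈ 𝓝 c₁ :=
    IsOpen.mem_nhds (isOpen_Iio.preimage (P.continuous_op_right hs'0 hs'top)) hs'
  obtain ⟨u, hc₁u, hsub⟩ := exists_Ico_subset_of_mem_nhds hU ⟨⊤, lt_trans hc₁t₀ ht₀top⟩
  have hinf : (⨅ s ∈ Ioi (0:ℝ≥0∞), P.op s t₁) < u := hc₁u
  obtain ⟨s, hs1⟩ := iInf_lt_iff.mp hinf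
  obtain ⟨hs0, hsu⟩ := iInf_lt_iff.mp hs1
  have hv1 : c₁ ≤ P.op s t₁ := iInf₂_le s hs0
  have hvU : P.op s' (P.op s t₁) < c₁ := hsub ⟨hv1, hsu⟩
  have hassoc : P.op s' (P.op s t₁) = P.op (P.op s' s) t₁ := (P.assoc _ _ _).symm
  have hpos : (0:ℝ≥0∞) < P.op s' s := by
    rcases eq_or_lt_of_le (zero_le : (0:ℝ≥0∞) ≤ P.op s' s) with h | h
    · rcases P.no_zero_divisors _ _ h.symm with h1 | h1
      · exact absurd h1 (ne_of_gt hs'0)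
      · exact absurd h1 (ne_of_gt hs0)
    · exact h
  have hge : c₁ ≤ P.op (P.op s' s) t₁ := iInf₂_le _ hpos
  rw [hassoc] at hvU
  exact absurd (lt_of_le_of_lt hge hvU) (lt_irrefl _)

lemma Nondegenerate.charF (hN : P.Nondegenerate) :
    {t : ℝ≥0∞ | P.OFinite t} = univ ∨
      ∃ φ : ℝ≥0∞, P.one < φ ∧ {t : ℝ≥0∞ | P.OFinite t} = Iio φ := by
  by_cases htop : P.OFinite ⊤
  · left
    exact eq_univ_of_forall fun t => P.ofinite_anti le_top htop
  · right
    have hstep : ∀ t, P.OFinite t → ∃ t', t < t' ∧ P.OFinite t' := by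
      intro t ht
      by_contra hc
      push_neg at hc
      have htne : t ≠ ⊤ := fun h => htop (h ▸ ht)
      exact hN.no_max ht htne fun t' h' hf => (hc t' h') hf
    obtain ⟨t', h1, h2⟩ := hstep P.one hN
    refine ⟨sSup {t : ℝ≥0∞ | P.OFinite t}, lt_of_lt_of_le h1 (le_sSup h2), ?_⟩
    ext t
    simp only [mem_setOf_eq, mem_Iio]
    constructor
    · intro ht
      obtain ⟨u, hu1, hu2⟩ := hstep t ht
      exact lt_of_lt_of_le hu1 (le_sSup hu2)
    · intro ht
      obtain ⟨u, huF, htu⟩ := lt_sSup_iff.mp ht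
      exact P.ofinite_anti htu.le huF

end PseudoMul


/-- Characterizations of non-degeneracy of a pseudo-multiplication. -/
theorem nondegenerate_tfae (P : PseudoMul) :
    [P.Nondegenerate,
      ∃ t : ℝ≥0∞, 0 < t ∧ P.OFinite t,
      ∀ s t : ℝ≥0∞, s ≤ P.one → t ≤ P.one → P.op s t = P.op t s,
      {t : ℝ≥0∞ | P.OFinite t} = univ ∨
        ∃ φ : ℝ≥0∞, P.one < φ ∧ {t : ℝ≥0∞ | P.OFinite t} = Iio φ].TFAE := by
  tfae_have 1 → 2 := fun h => ⟨P.one, P.one_pos, h⟩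
  tfae_have 2 → 1 := by
    rintro ⟨t, ht0, htF⟩
    set C := ⨅ u ∈ Ioi (0:ℝ≥0∞), P.op u P.one with hCdef
    have hkey : ∀ s ∈ Ioi (0:ℝ≥0∞), P.op C t ≤ P.op s t := by
      intro s hs
      have h1 : C ≤ P.op s P.one := iInf₂_le s hs
      calc P.op C t ≤ P.op (P.op s P.one) t := P.mono_left t h1
        _ = P.op s (P.op P.one t) := P.assoc _ _ _
        _ = P.op s t := by rw [P.one_op]
    have h0 : P.op C t = 0 := by
      refine le_antisymm ?_ zero_le
      have := le_iInf₂ hkey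
      rwa [htF] at this
    rcases P.no_zero_divisors _ _ h0 with h | h
    · exact h
    · exact absurd h (ne_of_gt ht0)
  tfae_have 1 → 3 := fun h s t hs ht => h.comm hs ht
  tfae_have 3 → 1 := by
    intro h
    refine P.ofinite_of_forall fun ε hε => ?_
    obtain ⟨s₀, hs₀0, hs₀⟩ := exists_between (show (0:ℝ≥0∞) < min ε P.one from
      lt_min hε P.one_pos)
    refine ⟨s₀, hs₀0, ?_⟩
    have hs₀one : s₀ ≤ P.one := le_of_lt (lt_of_lt_of_le hs₀ (min_le_right _ _))
    rw [h s₀ P.one hs₀one le_rfl, P.one_op]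
    exact lt_of_lt_of_le hs₀ (min_le_left _ _)
  tfae_have 1 → 4 := fun h => h.charF
  tfae_have 4 → 1 := by
    rintro (h | ⟨φ, hφ, h⟩)
    · have h1 : P.one ∈ {t : ℝ≥0∞ | P.OFinite t} := h ▸ mem_univ _
      exact h1
    · have h1 : P.one ∈ {t : ℝ≥0∞ | P.OFinite t} := by
        rw [h]
        exact hφ
      exact h1
  tfae_finish
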